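/- Let χ be an r-fold vector cross product on a real inner product space V, let g ⊂ so(V) be the Lie subalgebra of skew-symmetric endomorphisms ζ satisfying Σᵢ φ(v₁,...,ζ(vᵢ),...,v_{r+1}) = 0 for all vᵢ, identified with a subspace of Λ²V* via the metric. Then τ(v₁,...,v_{r+1}) is orthogonal to g for all vᵢ ∈ V, i.e., the image of τ lies in g^⊥ ⊂ Λ²V. -/

import Mathlib

open scoped RealInnerProductSpace

/-- The associated form of an `r`-fold vector cross product. -/
noncomputable def vcpForm {V : Type*} [NormedAddCommGroup V] [InnerProductSpace ℝ V]
    {r : ℕ} (χ : AlternatingMap ℝ V V (Fin r)) (v : Fin (r+1) → V) : ℝ :=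
  ⟪χ (fun i => v i.castSucc), v (Fin.last r)⟫

/-- The associated `(r+1)`-form as an alternating map, given `hperp`. -/
noncomputable def vcpPhi {V : Type*} [NormedAddCommGroup V] [InnerProductSpace ℝ V]
    {r : ℕ} (χ : AlternatingMap ℝ V V (Fin r))
    (hperp : ∀ (v : Fin r → V) (i : Fin r), ⟪χ v, v i⟫ = 0) :
    AlternatingMap ℝ V ℝ (Fin (r+1)) where
  toMultilinearMap :=
    MultilinearMap.uncurryRight ((innerₗ V).compMultilinearMap χ.toMultilinearMap)
  map_eq_zero_of_eq' := by
    intro v i j hv hij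
    show ⟪χ (Fin.init v), v (Fin.last r)⟫ = 0
    rcases eq_or_ne i (Fin.last r) with hi | hi
    · have hj : j ≠ Fin.last r := fun h => hij (hi.trans h.symm)
      have hval : Fin.init v (j.castPred hj) = v (Fin.last r) := by
        simp only [Fin.init, Fin.castSucc_castPred]
        rw [← hv, hi]
      rw [← hval]
      exact hperp _ _
    · rcases eq_or_ne j (Fin.last r) with hj | hj
      · have hval : Fin.init v (i.castPred hi) = v (Fin.last r) := by
          simp only [Fin.init, Fin.castSucc_castPred]
          rw [hv, hj]
        rw [← hval]
        exact hperp _ _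
      · have : χ (Fin.init v) = 0 := by
          apply χ.map_eq_zero_of_eq _ (i := i.castPred hi) (j := j.castPred hj)
          · simp only [Fin.init, Fin.castSucc_castPred]; exact hv
          · intro h
            apply hij
            have := congrArg Fin.castSucc h
            simpa [Fin.castSucc_castPred] using this
        rw [this, inner_zero_left]

theorem tau_orthogonal_to_vcp_infinitesimal_symmetries
    {V : Type*} [NormedAddCommGroup V] [InnerProductSpace ℝ V] (r : ℕ)
    (χ : AlternatingMap ℝ V V (Fin r))
    (hperp : ∀ (v : Fin r → V) (i : Fin r), ⟪χ v, v i⟫ = 0)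
    (hnorm : ∀ v : Fin r → V,
      ⟪χ v, χ v⟫ = Matrix.det (Matrix.of fun i j => ⟪v i, v j⟫))
    (ζ : V →ₗ[ℝ] V)
    (hskew : ∀ u w : V, ⟪ζ u, w⟫ + ⟪u, ζ w⟫ = 0)
    (hg : ∀ v : Fin (r+1) → V,
      ∑ i : Fin (r+1), vcpForm χ (Function.update v i (ζ (v i))) = 0) :
    ∀ v : Fin (r+1) → V,
      (Real.sqrt (r+1))⁻¹ *
        ∑ k : Fin (r+1), (-1 : ℝ) ^ (k : ℕ) *
          ⟪ζ (v k), χ (fun i => v (k.succAbove i))⟫ = 0 := by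
  intro v
  set Φ := vcpPhi χ hperp with hΦ
  -- Φ agrees with vcpForm
  have hA : ∀ w : Fin (r+1) → V, Φ w = vcpForm χ w := fun w => rfl
  -- value of Φ on a snoc
  have hsnoc : ∀ (w : Fin r → V) (u : V), Φ (Fin.snoc w u) = ⟪χ w, u⟫ := by
    intro w u
    have hinit : (fun i : Fin r => (Fin.snoc w u : Fin (r+1) → V) i.castSucc) = w := by
      funext i; simp
    rw [hA]
    unfold vcpForm
    rw [Fin.snoc_last, hinit]
  -- value of Φ on a cons
  have hcons : ∀ (w : Fin r → V) (u : V),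
      Φ (Fin.cons u w) = (-1 : ℝ) ^ r * ⟪χ w, u⟫ := by
    intro w u
    have hfun : Fin.cons u w = (Fin.snoc w u : Fin (r+1) → V) ∘ ⇑(finRotate (r+1))⁻¹ := by
      funext x
      induction x using Fin.cases with
      | zero =>
        have h0 : (finRotate (r+1))⁻¹ (0 : Fin (r+1)) = Fin.last r := by
          apply (finRotate (r+1)).injective
          simp [finRotate_last]
        simp only [Function.comp_apply, h0]; simp
      | succ j =>
        have hs : (finRotate (r+1))⁻¹ (j.succ) = j.castSucc := by
          apply (finRotate (r+1)).injective
          simp [finRotate_succ_apply, Fin.coeSucc_eq_succ]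
        simp only [Function.comp_apply, hs]; simp
    rw [hfun]
    have := Φ.map_perm (Fin.snoc w u) (finRotate (r+1))⁻¹
    rw [this, hsnoc]
    have hsign : Equiv.Perm.sign (finRotate (r+1))⁻¹ = (-1 : ℤˣ) ^ r := by
      rw [Equiv.Perm.sign_inv, sign_finRotate]; simp
    rw [hsign]
    rcases Nat.even_or_odd r with he | ho
    · rw [he.neg_one_pow, he.neg_one_pow]; simp
    · rw [ho.neg_one_pow, ho.neg_one_pow]; simp
  -- value of Φ on an update, via the cycle permutation
  have hupd : ∀ (k : Fin (r+1)) (u : V),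
      Φ (Function.update v k u)
        = (-1 : ℝ) ^ (k : ℕ) * Φ (Fin.cons u (fun i => v (k.succAbove i))) := by
    intro k u
    have hfun : Function.update v k u
        = (Fin.cons u (fun i => v (k.succAbove i)) : Fin (r+1) → V) ∘ k.cycleRange := by
      funext x
      rcases eq_or_ne x k with hx | hx
      · subst hx
        simp [Fin.cycleRange_self]
      · obtain ⟨j, rfl⟩ := Fin.exists_succAbove_eq hx
        rw [Function.update_of_ne hx]
        simp [Fin.cycleRange_succAbove]
    rw [hfun, Φ.map_perm, Fin.sign_cycleRange]
    rcases Nat.even_or_odd (k : ℕ) with he | ho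
    · rw [he.neg_one_pow, he.neg_one_pow]; simp
    · rw [ho.neg_one_pow, ho.neg_one_pow]; simp
  -- key identity per term
  have key : ∀ k : Fin (r+1),
      (-1 : ℝ) ^ (k : ℕ) * ⟪ζ (v k), χ (fun i => v (k.succAbove i))⟫
        = (-1 : ℝ) ^ r * vcpForm χ (Function.update v k (ζ (v k))) := by
    intro k
    rw [← hA, hupd, hcons, real_inner_comm]
    have h2 : ((-1 : ℝ)) ^ r * (-1 : ℝ) ^ r = 1 := by
      rw [← pow_add]
      exact Even.neg_one_pow ⟨r, rfl⟩
    linear_combination (-((-1:ℝ) ^ (k : ℕ)) * ⟪χ (fun i => v (k.succAbove i)), ζ (v k)⟫) * h2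
  rw [Finset.sum_congr rfl (fun k _ => key k), ← Finset.mul_sum, hg v]
  ring
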